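/- The number of multi-Catalan tableaux of size n with r A's on the diagonal, counted with α=β=1, equals (2(r+1)/(n+r+2)) * binomial(2n+1, n-r). -/

import Mathlib

inductive MSym : Type
  | a | b | x
deriving DecidableEq

inductive Letter : Type
  | D | E | A
deriving DecidableEq

/-- The content of the diagonal box of row `i` in a staircase filling of size `n`
(boxes `(i, j)` with `i + j < n`; the diagonal box of row `i` is `(i, n-1-i)`). -/
def diagRow (n : ℕ) (F : Fin n → Fin n → Option MSym) (i : Fin n) : Option MSym :=
  F i ⟨n - 1 - (i : ℕ), by have := i.isLt; omega⟩

def diagCol (n : ℕ) (F : Fin n → Fin n → Option MSym) (j : Fin n) : Option MSym :=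
  F ⟨n - 1 - (j : ℕ), by have := j.isLt; omega⟩ j

/-- A box is forced to be empty if there is a `β` to its right in its row or an `α`
below it in its column. -/
def ForcedEmpty (n : ℕ) (F : Fin n → Fin n → Option MSym) (i j : Fin n) : Prop :=
  (∃ j' : Fin n, j < j' ∧ F i j' = some MSym.b) ∨ (∃ i' : Fin n, i < i' ∧ F i' j = some MSym.a)

/-- A multi-Catalan tableau of size `n`: every box on the diagonal is filled (α, β or x);
a box left of a β in its row or above an α in its column is empty; a non-forced box in a
D-row and E-column contains α or β; in a D-row and A-column contains β; in an A-row and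
E-column contains α; every other box is empty. -/
def IsMCT (n : ℕ) (F : Fin n → Fin n → Option MSym) : Prop :=
  (∀ i j : Fin n, n ≤ (i : ℕ) + (j : ℕ) → F i j = none) ∧
  (∀ i : Fin n, diagRow n F i ≠ none) ∧
  (∀ i j : Fin n, (i : ℕ) + (j : ℕ) < n - 1 →
    (ForcedEmpty n F i j → F i j = none) ∧
    (¬ ForcedEmpty n F i j →
      match diagRow n F i, diagCol n F j with
      | some MSym.a, some MSym.b => F i j = some MSym.a ∨ F i j = some MSym.b
      | some MSym.a, some MSym.x => F i j = some MSym.b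
      | some MSym.x, some MSym.b => F i j = some MSym.a
      | _, _ => F i j = none))

def symToLetter : Option MSym → Letter
  | some MSym.a => Letter.D
  | some MSym.b => Letter.E
  | _ => Letter.A

/-- The type of a tableau: the word in {D, E, A} read off the diagonal from top to bottom. -/
def typeWord (n : ℕ) (F : Fin n → Fin n → Option MSym) : List Letter :=
  List.ofFn fun i : Fin n => symToLetter (diagRow n F i)

def countSym (n : ℕ) (F : Fin n → Fin n → Option MSym) (s : MSym) : ℕ :=
  (Finset.univ.filter fun p : Fin n × Fin n => F p.1 p.2 = some s).card

/-- The weight of a tableau: the product of all its α's and β's. -/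
noncomputable def wt (n : ℕ) (α β : ℝ) (F : Fin n → Fin n → Option MSym) : ℝ :=
  α ^ countSym n F MSym.a * β ^ countSym n F MSym.b

/-- The weight generating function of a word: the sum of the weights over all
multi-Catalan tableaux of that type. -/
noncomputable def wordWeight (α β : ℝ) (X : List Letter) : ℝ :=
  ∑ᶠ T : {F : Fin X.length → Fin X.length → Option MSym //
      IsMCT X.length F ∧ typeWord X.length F = X}, wt X.length α β T.1

-- ============ auxiliary development ============
namespace MCTaux

open Finset

attribute [local instance] Classical.propDecidable

instance : Fintype MSym := ⟨{.a, .b, .x}, by intro y; cases y <;> simp⟩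

abbrev Grid (n : ℕ) := Fin n → Fin n → Option MSym

noncomputable def avail (n : ℕ) (F : Grid n) : Finset (Fin n) :=
  Finset.univ.filter fun j => diagCol n F j = some MSym.b ∧ ∀ i, F i j ≠ some MSym.a

noncomputable def statF (n : ℕ) (F : Grid n) : ℕ := (avail n F).card

def cA (n : ℕ) (F : Grid n) : ℕ := (typeWord n F).count Letter.A

noncomputable def TC (n r m : ℕ) : Finset (Grid n) :=
  univ.filter fun F => IsMCT n F ∧ cA n F = r ∧ statF n F = m

noncomputable def NS (n r : ℕ) : Finset (Grid n) :=
  univ.filter fun F => IsMCT n F ∧ cA n F = r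

variable {n : ℕ}

def res (n : ℕ) (F : Grid (n+1)) : Grid n := fun i j => F i.succ j.castSucc

def ext (n : ℕ) (F' : Grid n) (t : Fin (n+1) → Option MSym) : Grid (n+1) :=
  fun i j => if hi : i = 0 then t j else
    if hj : j = Fin.last n then none else F' (i.pred hi) (j.castPred hj)

@[simp] lemma ext_zero (F' : Grid n) (t) (j : Fin (n+1)) : ext n F' t 0 j = t j := by
  simp [ext]

@[simp] lemma ext_succ_cast (F' : Grid n) (t) (i : Fin n) (j : Fin n) :
    ext n F' t i.succ j.castSucc = F' i j := by
  simp [ext, Fin.succ_ne_zero, (Fin.castSucc_lt_last j).ne]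

@[simp] lemma ext_succ_last (F' : Grid n) (t) (i : Fin n) :
    ext n F' t i.succ (Fin.last n) = none := by
  simp [ext, Fin.succ_ne_zero]

@[simp] lemma res_ext (F' : Grid n) (t) : res n (ext n F' t) = F' := by
  funext i j; simp [res]

lemma diagRow_res (F : Grid (n+1)) (i : Fin n) :
    diagRow n (res n F) i = diagRow (n+1) F i.succ := by
  unfold diagRow res
  congr 1
  all_goals (apply Fin.ext; simp only [Fin.val_mk, Fin.val_succ, Fin.coe_castSucc, Fin.val_last, Fin.val_zero]; omega)


lemma diagCol_res (F : Grid (n+1)) (j : Fin n) :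
    diagCol n (res n F) j = diagCol (n+1) F j.castSucc := by
  unfold diagCol res
  congr 1
  all_goals (apply Fin.ext; simp only [Fin.val_mk, Fin.val_succ, Fin.coe_castSucc, Fin.val_last, Fin.val_zero]; omega)


lemma diagRow_zero (F : Grid (n+1)) : diagRow (n+1) F 0 = F 0 (Fin.last n) := by
  unfold diagRow
  congr 1
  all_goals (apply Fin.ext; simp only [Fin.val_mk, Fin.val_succ, Fin.coe_castSucc, Fin.val_last, Fin.val_zero]; omega)

lemma diagCol_last (F : Grid (n+1)) : diagCol (n+1) F (Fin.last n) = F 0 (Fin.last n) := by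
  unfold diagCol
  congr 1
  all_goals (apply Fin.ext; simp only [Fin.val_mk, Fin.val_succ, Fin.coe_castSucc, Fin.val_last, Fin.val_zero]; omega)


lemma diagCol_eq_diagRow (F : Grid n) (j : Fin n) :
    diagCol n F j = diagRow n F ⟨n - 1 - (j : ℕ), by have := j.isLt; omega⟩ := by
  unfold diagRow diagCol
  congr 1
  all_goals (apply Fin.ext; simp only [Fin.val_mk, Fin.val_succ, Fin.coe_castSucc, Fin.val_last, Fin.val_zero]; omega)


def colHasA (n : ℕ) (F : Grid n) (j : Fin n) : Prop := ∃ i, F i j = some MSym.a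

lemma mem_avail {F : Grid n} {j : Fin n} :
    j ∈ avail n F ↔ diagCol n F j = some MSym.b ∧ ¬ colHasA n F j := by
  simp [avail, colHasA]

lemma eq_diag {F : Grid n} (i j : Fin n) (hij : (i : ℕ) + (j : ℕ) = n - 1) :
    F i j = diagRow n F i := by
  unfold diagRow
  congr 1
  apply Fin.ext
  have := i.isLt
  simp only [Fin.val_mk]
  omega

lemma eq_diag_col {F : Grid n} (i j : Fin n) (hij : (i : ℕ) + (j : ℕ) = n - 1) :
    F i j = diagCol n F j := by
  unfold diagCol
  congr 1
  apply Fin.ext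
  have := j.isLt
  simp only [Fin.val_mk]
  omega

lemma xrow_no_b {F : Grid n} (h : IsMCT n F) {i : Fin n} (hx : diagRow n F i = some MSym.x)
    (j : Fin n) : F i j ≠ some MSym.b := by
  intro hb
  rcases lt_trichotomy ((i : ℕ) + (j : ℕ)) (n - 1) with hlt | heq | hgt
  · have hc := h.2.2 i j hlt
    by_cases hf : ForcedEmpty n F i j
    · rw [hc.1 hf] at hb; exact nomatch hb
    · have hm := hc.2 hf
      split at hm <;> simp_all
  · rw [eq_diag (F := F) i j heq, hx] at hb; simp at hb
  · have h0 := h.1 i j (by have := i.isLt; have := j.isLt; omega)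
    rw [h0] at hb; exact nomatch hb

lemma xcol_no_a {F : Grid n} (h : IsMCT n F) {j : Fin n} (hx : diagCol n F j = some MSym.x)
    (i : Fin n) : F i j ≠ some MSym.a := by
  intro ha
  rcases lt_trichotomy ((i : ℕ) + (j : ℕ)) (n - 1) with hlt | heq | hgt
  · have hc := h.2.2 i j hlt
    by_cases hf : ForcedEmpty n F i j
    · rw [hc.1 hf] at ha; exact nomatch ha
    · have hm := hc.2 hf
      split at hm <;> simp_all
  · rw [eq_diag_col (F := F) i j heq, hx] at ha; simp at ha
  · have h0 := h.1 i j (by have := i.isLt; have := j.isLt; omega)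
    rw [h0] at ha; exact nomatch ha

lemma forced_succ (F : Grid (n+1)) (hnone : ∀ i : Fin n, F i.succ (Fin.last n) = none)
    (i j : Fin n) : ForcedEmpty n (res n F) i j ↔ ForcedEmpty (n+1) F i.succ j.castSucc := by
  constructor
  · rintro (⟨j', hj', hb⟩ | ⟨i', hi', ha⟩)
    · exact Or.inl ⟨j'.castSucc, by simpa using hj', hb⟩
    · exact Or.inr ⟨i'.succ, by simpa using hi', ha⟩
  · rintro (⟨j', hj', hb⟩ | ⟨i', hi', ha⟩)
    · by_cases hl : j' = Fin.last n
      · rw [hl, hnone i] at hb; exact nomatch hb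
      · obtain ⟨j₀, rfl⟩ := Fin.exists_castSucc_eq.mpr hl
        exact Or.inl ⟨j₀, by simpa using hj', hb⟩
    · have hne : i' ≠ 0 := by
        intro h0; rw [h0] at hi'; exact absurd hi' (by simp)
      obtain ⟨i₀, rfl⟩ := Fin.exists_succ_eq.mpr hne
      exact Or.inr ⟨i₀, by simpa using hi', ha⟩

lemma isMCT_res {F : Grid (n+1)} (h : IsMCT (n+1) F) : IsMCT n (res n F) := by
  have hnone : ∀ i : Fin n, F i.succ (Fin.last n) = none := fun i =>
    h.1 i.succ (Fin.last n) (by simp)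
  refine ⟨fun i j hij => h.1 i.succ j.castSucc (by simp; omega),
    fun i => by rw [diagRow_res]; exact h.2.1 i.succ, fun i j hij => ?_⟩
  have hc := h.2.2 i.succ j.castSucc (by simp; have := i.isLt; omega)
  rw [diagRow_res, diagCol_res]
  constructor
  · intro hf
    exact hc.1 ((forced_succ F hnone i j).mp hf)
  · intro hf
    exact hc.2 (fun hf' => hf ((forced_succ F hnone i j).mpr hf'))
lemma forced_zero (F : Grid (n+1)) (j : Fin n) :
    ForcedEmpty (n+1) F 0 j.castSucc ↔
      ((∃ j₀ : Fin n, j < j₀ ∧ F 0 j₀.castSucc = some MSym.b) ∨ F 0 (Fin.last n) = some MSym.b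
        ∨ colHasA n (res n F) j) := by
  constructor
  · rintro (⟨j', hj', hb⟩ | ⟨i', hi', ha⟩)
    · by_cases hl : j' = Fin.last n
      · exact Or.inr (Or.inl (hl ▸ hb))
      · obtain ⟨j₀, rfl⟩ := Fin.exists_castSucc_eq.mpr hl
        exact Or.inl ⟨j₀, by simpa using hj', hb⟩
    · have hne : i' ≠ 0 := by
        intro h0; rw [h0] at hi'; exact absurd hi' (by simp)
      obtain ⟨i₀, rfl⟩ := Fin.exists_succ_eq.mpr hne
      exact Or.inr (Or.inr ⟨i₀, ha⟩)
  · rintro (⟨j₀, hj₀, hb⟩ | hb | ⟨i₀, ha⟩)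
    · exact Or.inl ⟨j₀.castSucc, by simpa using hj₀, hb⟩
    · exact Or.inl ⟨Fin.last n, Fin.castSucc_lt_last j, hb⟩
    · exact Or.inr ⟨i₀.succ, Fin.succ_pos i₀, ha⟩

lemma avail_succ_eq (F : Grid (n+1)) (hnone : ∀ i : Fin n, F i.succ (Fin.last n) = none) :
    avail (n+1) F =
      (if F 0 (Fin.last n) = some MSym.b then {Fin.last n} else ∅) ∪
      ((avail n (res n F)).filter (fun j => F 0 j.castSucc ≠ some MSym.a)).image Fin.castSucc := by
  ext x
  induction x using Fin.lastCases with
  | last =>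
    have h1 : Fin.last n ∉ ((avail n (res n F)).filter
        (fun j => F 0 j.castSucc ≠ some MSym.a)).image Fin.castSucc := by
      simp only [mem_image]
      rintro ⟨j, -, hj⟩
      exact absurd hj (Fin.castSucc_lt_last j).ne
    simp only [mem_union, h1, or_false, mem_avail, diagCol_last]
    by_cases hb : F 0 (Fin.last n) = some MSym.b
    · rw [if_pos hb]
      simp only [mem_singleton]
      constructor
      · intro _; trivial
      · intro _
        refine ⟨hb, ?_⟩
        rintro ⟨i, ha⟩
        rcases Fin.eq_zero_or_eq_succ i with rfl | ⟨i₀, rfl⟩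
        · rw [hb] at ha; simp at ha
        · rw [hnone i₀] at ha; exact nomatch ha
    · rw [if_neg hb]
      simp [hb]
  | cast j =>
    have h2 : j.castSucc ∉ (if F 0 (Fin.last n) = some MSym.b then ({Fin.last n} : Finset (Fin (n+1))) else ∅) := by
      split <;> simp [(Fin.castSucc_lt_last j).ne]
    simp only [mem_union, h2, false_or, mem_image, mem_filter]
    constructor
    · intro hx
      rcases mem_avail.mp hx with ⟨hd, hna⟩
      refine ⟨j, ⟨mem_avail.mpr ⟨by rw [diagCol_res]; exact hd,
        fun hcol => hna (hcol.elim fun i₀ ha => ⟨i₀.succ, ha⟩)⟩, fun h0 => hna ⟨0, h0⟩⟩, rfl⟩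
    · rintro ⟨j', ⟨hj', hna⟩, hcast⟩
      obtain rfl : j' = j := Fin.castSucc_injective n hcast
      rcases mem_avail.mp hj' with ⟨hd, hca⟩
      refine mem_avail.mpr ⟨by rw [← diagCol_res]; exact hd, ?_⟩
      rintro ⟨i, ha⟩
      rcases Fin.eq_zero_or_eq_succ i with rfl | ⟨i₀, rfl⟩
      · exact hna ha
      · exact hca ⟨i₀, ha⟩

lemma stat_succ (F : Grid (n+1)) (hnone : ∀ i : Fin n, F i.succ (Fin.last n) = none) :
    statF (n+1) F = (if F 0 (Fin.last n) = some MSym.b then 1 else 0)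
      + ((avail n (res n F)).filter (fun j => F 0 j.castSucc ≠ some MSym.a)).card := by
  unfold statF
  rw [avail_succ_eq F hnone, card_union_of_disjoint, card_image_of_injective _ (Fin.castSucc_injective n)]
  · congr 1
    split <;> simp
  · rw [disjoint_left]
    intro x hx hx'
    simp only [mem_image] at hx'
    obtain ⟨j, -, rfl⟩ := hx'
    revert hx
    split <;> simp [(Fin.castSucc_lt_last j).ne]

lemma typeWord_succ (F : Grid (n+1)) :
    typeWord (n+1) F = symToLetter (F 0 (Fin.last n)) :: typeWord n (res n F) := by
  unfold typeWord
  simp only [List.ofFn_succ]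
  rw [diagRow_zero]
  have ht : (fun i : Fin n => symToLetter (diagRow (n+1) F i.succ))
      = fun i => symToLetter (diagRow n (res n F) i) := by
    funext i; rw [diagRow_res]
  rw [ht]

lemma cA_succ (F : Grid (n+1)) :
    cA (n+1) F = (if symToLetter (F 0 (Fin.last n)) = Letter.A then 1 else 0) + cA n (res n F) := by
  unfold cA
  rw [typeWord_succ, List.count_cons]
  rw [Nat.add_comm]
  congr 1
  split <;> split <;> simp_all

lemma aCol_lt_avail {F : Grid n} (h : IsMCT n F) {q j : Fin n} (hq : q ∈ avail n F)
    (hj : diagCol n F j = some MSym.x) : j < q := by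
  rcases mem_avail.mp hq with ⟨hqb, hqa⟩
  rcases lt_trichotomy j q with h1 | rfl | h1
  · exact h1
  · rw [hqb] at hj; exact absurd (Option.some.inj hj) (by simp)
  · exfalso
    have hjlt := j.isLt
    set ij : Fin n := ⟨n - 1 - (j : ℕ), by omega⟩ with hij
    have hxrow : diagRow n F ij = some MSym.x := by
      rw [← diagCol_eq_diagRow]; exact hj
    have hlt : (ij : ℕ) + (q : ℕ) < n - 1 := by
      simp only [hij]
      have := q.isLt
      omega
    have hc := h.2.2 ij q hlt
    by_cases hf : ForcedEmpty n F ij q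
    · rcases hf with ⟨j', hj', hb⟩ | ⟨i', hi', ha⟩
      · exact xrow_no_b h hxrow j' hb
      · exact hqa ⟨i', ha⟩
    · have hm := hc.2 hf
      rw [hxrow, hqb] at hm
      exact hqa ⟨ij, hm⟩
def MatchOK (dr dc v : Option MSym) : Prop :=
  match dr, dc with
  | some MSym.a, some MSym.b => v = some MSym.a ∨ v = some MSym.b
  | some MSym.a, some MSym.x => v = some MSym.b
  | some MSym.x, some MSym.b => v = some MSym.a
  | _, _ => v = none

lemma isMCT_def (F : Grid n) : IsMCT n F ↔
    ((∀ i j : Fin n, n ≤ (i : ℕ) + (j : ℕ) → F i j = none) ∧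
    (∀ i : Fin n, diagRow n F i ≠ none) ∧
    (∀ i j : Fin n, (i : ℕ) + (j : ℕ) < n - 1 →
      (ForcedEmpty n F i j → F i j = none) ∧
      (¬ ForcedEmpty n F i j → MatchOK (diagRow n F i) (diagCol n F j) (F i j)))) :=
  Iff.rfl

noncomputable def rowE (n : ℕ) : Fin (n+1) → Option MSym :=
  fun j => if j = Fin.last n then some MSym.b else none

noncomputable def rowX (n : ℕ) (F' : Grid n) : Fin (n+1) → Option MSym := fun j =>
  if hj : j = Fin.last n then some MSym.x else
    if j.castPred hj ∈ avail n F' then some MSym.a else none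

noncomputable def rowD (n : ℕ) (F' : Grid n) (p : Option (Fin n)) : Fin (n+1) → Option MSym :=
  fun j =>
  if hj : j = Fin.last n then some MSym.a else
    match p with
    | none => if j.castPred hj ∈ avail n F' then some MSym.a else none
    | some q => if j.castPred hj = q then some MSym.b
        else if q < j.castPred hj ∧ j.castPred hj ∈ avail n F' then some MSym.a else none

@[simp] lemma rowE_last : rowE n (Fin.last n) = some MSym.b := by simp [rowE]
@[simp] lemma rowX_last (F' : Grid n) : rowX n F' (Fin.last n) = some MSym.x := by simp [rowX]
@[simp] lemma rowD_last (F' : Grid n) (p) : rowD n F' p (Fin.last n) = some MSym.a := by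
  simp [rowD]

@[simp] lemma rowE_cast (j : Fin n) : rowE n j.castSucc = none := by
  simp [rowE, (Fin.castSucc_lt_last j).ne]

@[simp] lemma rowX_cast (F' : Grid n) (j : Fin n) :
    rowX n F' j.castSucc = if j ∈ avail n F' then some MSym.a else none := by
  simp [rowX, (Fin.castSucc_lt_last j).ne]
  exact if_congr Iff.rfl rfl rfl

@[simp] lemma rowD_none_cast (F' : Grid n) (j : Fin n) :
    rowD n F' none j.castSucc = if j ∈ avail n F' then some MSym.a else none := by
  simp [rowD, (Fin.castSucc_lt_last j).ne]
  exact if_congr Iff.rfl rfl rfl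

@[simp] lemma rowD_some_cast (F' : Grid n) (q : Fin n) (j : Fin n) :
    rowD n F' (some q) j.castSucc = if j = q then some MSym.b
      else if q < j ∧ j ∈ avail n F' then some MSym.a else none := by
  simp [rowD, (Fin.castSucc_lt_last j).ne]
  exact if_congr Iff.rfl rfl (if_congr Iff.rfl rfl rfl)

def validD (n : ℕ) (F' : Grid n) : Option (Fin n) → Prop
  | none => ∀ j, diagCol n F' j ≠ some MSym.x
  | some q => q ∈ avail n F' ∨
      (diagCol n F' q = some MSym.x ∧ ∀ j, q < j → diagCol n F' j ≠ some MSym.x)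

noncomputable def cntP (n : ℕ) (F' : Grid n) : Option (Fin n) → ℕ
  | none => 0
  | some q => ((avail n F').filter (fun x => x ≤ q)).card

lemma diagRow_ext_zero (F' : Grid n) (t) : diagRow (n+1) (ext n F' t) 0 = t (Fin.last n) := by
  rw [diagRow_zero, ext_zero]

lemma diagRow_ext_succ (F' : Grid n) (t) (i : Fin n) :
    diagRow (n+1) (ext n F' t) i.succ = diagRow n F' i := by
  rw [← diagRow_res, res_ext]

lemma diagCol_ext_cast (F' : Grid n) (t) (j : Fin n) :
    diagCol (n+1) (ext n F' t) j.castSucc = diagCol n F' j := by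
  rw [← diagCol_res, res_ext]

lemma isMCT_ext (F' : Grid n) (h : IsMCT n F') (t : Fin (n+1) → Option MSym)
    (hlast : t (Fin.last n) ≠ none)
    (hrow : ∀ j : Fin n,
      (ForcedEmpty (n+1) (ext n F' t) 0 j.castSucc → t j.castSucc = none) ∧
      (¬ ForcedEmpty (n+1) (ext n F' t) 0 j.castSucc →
        MatchOK (t (Fin.last n)) (diagCol n F' j) (t j.castSucc))) :
    IsMCT (n+1) (ext n F' t) := by
  rw [isMCT_def]
  refine ⟨?_, ?_, ?_⟩
  · intro i j hij
    rcases Fin.eq_zero_or_eq_succ i with rfl | ⟨i₀, rfl⟩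
    · exfalso
      have := j.isLt
      simp only [Fin.val_zero, Nat.zero_add] at hij
      omega
    · by_cases hl : j = Fin.last n
      · rw [hl]; exact ext_succ_last F' t i₀
      · obtain ⟨j₀, rfl⟩ := Fin.exists_castSucc_eq.mpr hl
        rw [ext_succ_cast]
        exact h.1 i₀ j₀ (by simp at hij ⊢; omega)
  · intro i
    rcases Fin.eq_zero_or_eq_succ i with rfl | ⟨i₀, rfl⟩
    · rw [diagRow_ext_zero]; exact hlast
    · rw [diagRow_ext_succ]; exact h.2.1 i₀
  · intro i j hij
    rcases Fin.eq_zero_or_eq_succ i with rfl | ⟨i₀, rfl⟩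
    · have hl : j ≠ Fin.last n := by
        intro hl
        subst hl
        simp only [Fin.val_zero, Fin.val_last, Fin.val_succ] at hij
        omega
      obtain ⟨j₀, rfl⟩ := Fin.exists_castSucc_eq.mpr hl
      refine ⟨fun hf => by rw [ext_zero]; exact (hrow j₀).1 hf, fun hf => ?_⟩
      rw [ext_zero, diagRow_ext_zero, diagCol_ext_cast]
      exact (hrow j₀).2 hf
    · have hl : j ≠ Fin.last n := by
        intro hl
        subst hl
        simp only [Fin.val_zero, Fin.val_last, Fin.val_succ] at hij
        omega
      obtain ⟨j₀, rfl⟩ := Fin.exists_castSucc_eq.mpr hl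
      have hij' : (i₀ : ℕ) + (j₀ : ℕ) < n - 1 := by simp at hij; omega
      have hc := (isMCT_def F').mp h |>.2.2 i₀ j₀ hij'
      have hfe : ForcedEmpty (n+1) (ext n F' t) i₀.succ j₀.castSucc ↔ ForcedEmpty n F' i₀ j₀ := by
        rw [← forced_succ (ext n F' t) (fun i => ext_succ_last F' t i) i₀ j₀, res_ext]
      refine ⟨fun hf => by rw [ext_succ_cast]; exact hc.1 (hfe.mp hf), fun hf => ?_⟩
      rw [ext_succ_cast, diagRow_ext_succ, diagCol_ext_cast]
      exact hc.2 (fun hf' => hf (hfe.mpr hf'))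
lemma forced_ext (F' : Grid n) (t) (j : Fin n) :
    ForcedEmpty (n+1) (ext n F' t) 0 j.castSucc ↔
      ((∃ j₀ : Fin n, j < j₀ ∧ t j₀.castSucc = some MSym.b) ∨ t (Fin.last n) = some MSym.b
        ∨ colHasA n F' j) := by
  rw [forced_zero]
  simp only [ext_zero, res_ext]

lemma isMCT_extE {F' : Grid n} (h : IsMCT n F') : IsMCT (n+1) (ext n F' (rowE n)) := by
  refine isMCT_ext F' h _ (by simp) (fun j => ?_)
  have hf : ForcedEmpty (n+1) (ext n F' (rowE n)) 0 j.castSucc :=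
    (forced_ext F' _ j).mpr (Or.inr (Or.inl (by simp)))
  exact ⟨fun _ => by simp, fun hnf => absurd hf hnf⟩

lemma isMCT_extX {F' : Grid n} (h : IsMCT n F') : IsMCT (n+1) (ext n F' (rowX n F')) := by
  refine isMCT_ext F' h _ (by simp) (fun j => ?_)
  have hforced : ForcedEmpty (n+1) (ext n F' (rowX n F')) 0 j.castSucc ↔ colHasA n F' j := by
    rw [forced_ext]
    constructor
    · rintro (⟨j₀, -, hb⟩ | hb | hc)
      · rw [rowX_cast] at hb; revert hb; split <;> simp
      · rw [rowX_last] at hb; simp at hb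
      · exact hc
    · exact fun hc => Or.inr (Or.inr hc)
  constructor
  · intro hf
    have hc := hforced.mp hf
    have : j ∉ avail n F' := fun hj => (mem_avail.mp hj).2 hc
    rw [rowX_cast, if_neg this]
  · intro hnf
    have hnc : ¬ colHasA n F' j := fun hc => hnf (hforced.mpr hc)
    rw [rowX_last, rowX_cast]
    rcases hd : diagCol n F' j with - | c
    · have : j ∉ avail n F' := fun hj => by rw [(mem_avail.mp hj).1] at hd; exact nomatch hd
      rw [if_neg this]; exact rfl
    · cases c
      · have : j ∉ avail n F' := fun hj => by
          have := (mem_avail.mp hj).1; rw [hd] at this; simp at this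
        rw [if_neg this]; exact rfl
      · have : j ∈ avail n F' := mem_avail.mpr ⟨hd, hnc⟩
        rw [if_pos this]; exact rfl
      · have : j ∉ avail n F' := fun hj => by
          have := (mem_avail.mp hj).1; rw [hd] at this; simp at this
        rw [if_neg this]; exact rfl

lemma isMCT_extD_none {F' : Grid n} (h : IsMCT n F') (hv : validD n F' none) :
    IsMCT (n+1) (ext n F' (rowD n F' none)) := by
  refine isMCT_ext F' h _ (by simp) (fun j => ?_)
  have hforced : ForcedEmpty (n+1) (ext n F' (rowD n F' none)) 0 j.castSucc ↔ colHasA n F' j := by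
    rw [forced_ext]
    constructor
    · rintro (⟨j₀, -, hb⟩ | hb | hc)
      · rw [rowD_none_cast] at hb; revert hb; split <;> simp
      · rw [rowD_last] at hb; simp at hb
      · exact hc
    · exact fun hc => Or.inr (Or.inr hc)
  constructor
  · intro hf
    have hc := hforced.mp hf
    have : j ∉ avail n F' := fun hj => (mem_avail.mp hj).2 hc
    rw [rowD_none_cast, if_neg this]
  · intro hnf
    have hnc : ¬ colHasA n F' j := fun hc => hnf (hforced.mpr hc)
    rw [rowD_last, rowD_none_cast]
    rcases hd : diagCol n F' j with - | c
    · have : j ∉ avail n F' := fun hj => by rw [(mem_avail.mp hj).1] at hd; exact nomatch hd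
      rw [if_neg this]; exact rfl
    · cases c
      · have : j ∉ avail n F' := fun hj => by
          have := (mem_avail.mp hj).1; rw [hd] at this; simp at this
        rw [if_neg this]; exact rfl
      · have : j ∈ avail n F' := mem_avail.mpr ⟨hd, hnc⟩
        rw [if_pos this]
        exact Or.inl rfl
      · exact absurd hd (hv j)

lemma isMCT_extD_some {F' : Grid n} (h : IsMCT n F') {q : Fin n} (hv : validD n F' (some q)) :
    IsMCT (n+1) (ext n F' (rowD n F' (some q))) := by
  have hncq : ¬ colHasA n F' q := by
    rcases hv with hq | ⟨hx, -⟩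
    · exact (mem_avail.mp hq).2
    · rintro ⟨i, ha⟩; exact xcol_no_a h hx i ha
  refine isMCT_ext F' h _ (by simp) (fun j => ?_)
  have hforced : ForcedEmpty (n+1) (ext n F' (rowD n F' (some q))) 0 j.castSucc ↔
      (j < q ∨ colHasA n F' j) := by
    rw [forced_ext]
    constructor
    · rintro (⟨j₀, hj₀, hb⟩ | hb | hc)
      · rw [rowD_some_cast] at hb
        revert hb
        split
        · next hq => intro _; exact Or.inl (hq ▸ hj₀)
        · split <;> simp
      · rw [rowD_last] at hb; simp at hb
      · exact Or.inr hc
    · rintro (hlt | hc)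
      · exact Or.inl ⟨q, hlt, by rw [rowD_some_cast, if_pos rfl]⟩
      · exact Or.inr (Or.inr hc)
  constructor
  · intro hf
    rw [rowD_some_cast]
    rcases hforced.mp hf with hlt | hc
    · rw [if_neg (by rintro rfl; exact absurd hlt (lt_irrefl _)), if_neg (by rintro ⟨h1, -⟩; exact absurd (h1.trans hlt) (lt_irrefl _))]
    · rw [if_neg (by rintro rfl; exact hncq hc),
        if_neg (by rintro ⟨-, hj⟩; exact (mem_avail.mp hj).2 hc)]
  · intro hnf
    have hnlt : ¬ j < q := fun hlt => hnf (hforced.mpr (Or.inl hlt))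
    have hnc : ¬ colHasA n F' j := fun hc => hnf (hforced.mpr (Or.inr hc))
    rw [rowD_last, rowD_some_cast]
    rcases eq_or_lt_of_le (not_lt.mp hnlt) with rfl | hqj
    · rw [if_pos rfl]
      rcases hv with hq | ⟨hx, -⟩
      · rw [(mem_avail.mp hq).1]
        exact Or.inr rfl
      · rw [hx]; exact rfl
    · have hjq : ¬ j = q := by rintro rfl; exact absurd hqj (lt_irrefl _)
      rw [if_neg hjq]
      rcases hd : diagCol n F' j with - | c
      · have hna : j ∉ avail n F' := fun hj => by
          rw [(mem_avail.mp hj).1] at hd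
          exact nomatch hd
        rw [if_neg (fun hc => hna hc.2)]
        exact rfl
      · cases c
        · have hna : j ∉ avail n F' := fun hj => by
            have h2 := (mem_avail.mp hj).1
            rw [hd] at h2
            simp at h2
          rw [if_neg (fun hc => hna hc.2)]
          exact rfl
        · have hja : j ∈ avail n F' := mem_avail.mpr ⟨hd, hnc⟩
          rw [if_pos ⟨hqj, hja⟩]
          exact Or.inl rfl
        · exfalso
          rcases hv with hq | ⟨-, hmax⟩
          · exact absurd (aCol_lt_avail h hq hd) (by omega)
          · exact hmax j hqj hd

lemma stat_ext (F' : Grid n) (t) :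
    statF (n+1) (ext n F' t) = (if t (Fin.last n) = some MSym.b then 1 else 0)
      + ((avail n F').filter (fun j => t j.castSucc ≠ some MSym.a)).card := by
  rw [stat_succ (ext n F' t) (fun i => ext_succ_last F' t i)]
  simp only [ext_zero, res_ext]

lemma stat_extE (F' : Grid n) : statF (n+1) (ext n F' (rowE n)) = statF n F' + 1 := by
  rw [stat_ext]
  simp only [rowE_last, if_pos]
  rw [filter_true_of_mem (fun j _ => by simp)]
  rw [Nat.add_comm]
  rfl

lemma stat_extX (F' : Grid n) : statF (n+1) (ext n F' (rowX n F')) = 0 := by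
  rw [stat_ext]
  simp only [rowX_last]
  rw [if_neg (by simp), filter_false_of_mem (fun j hj => by simp [rowX_cast, hj])]
  simp

lemma stat_extD_none (F' : Grid n) : statF (n+1) (ext n F' (rowD n F' none)) = 0 := by
  rw [stat_ext]
  simp only [rowD_last]
  rw [if_neg (by simp), filter_false_of_mem (fun j hj => by simp [rowD_none_cast, hj])]
  simp

lemma stat_extD_some (F' : Grid n) (q : Fin n) :
    statF (n+1) (ext n F' (rowD n F' (some q))) = cntP n F' (some q) := by
  rw [stat_ext]
  simp only [rowD_last]
  rw [if_neg (by simp), Nat.zero_add]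
  show ((avail n F').filter _).card = ((avail n F').filter (fun x => x ≤ q)).card
  congr 1
  apply filter_congr
  intro j hj
  rw [rowD_some_cast]
  rcases lt_trichotomy j q with h1 | rfl | h1
  · rw [if_neg (by rintro rfl; exact absurd h1 (lt_irrefl _)),
      if_neg (by rintro ⟨h2, -⟩; exact absurd (h2.trans h1) (lt_irrefl _))]
    simp [h1.le]
  · rw [if_pos rfl]; simp
  · rw [if_neg (by rintro rfl; exact absurd h1 (lt_irrefl _)), if_pos ⟨h1, hj⟩]
    simp [not_le.mpr h1]

lemma cA_ext (F' : Grid n) (t) :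
    cA (n+1) (ext n F' t) = (if symToLetter (t (Fin.last n)) = Letter.A then 1 else 0) + cA n F' := by
  rw [cA_succ]
  simp only [ext_zero, res_ext]

lemma cA_extE (F' : Grid n) : cA (n+1) (ext n F' (rowE n)) = cA n F' := by
  rw [cA_ext]; simp [symToLetter]

lemma cA_extX (F' : Grid n) : cA (n+1) (ext n F' (rowX n F')) = cA n F' + 1 := by
  rw [cA_ext]; simp [symToLetter, Nat.add_comm]

lemma cA_extD (F' : Grid n) (p) : cA (n+1) (ext n F' (rowD n F' p)) = cA n F' := by
  rw [cA_ext]; simp [symToLetter]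
lemma eq_ext {F : Grid (n+1)} (h : IsMCT (n+1) F) (t : Fin (n+1) → Option MSym)
    (hrow : ∀ j, F 0 j = t j) : F = ext n (res n F) t := by
  funext i j
  rcases Fin.eq_zero_or_eq_succ i with rfl | ⟨i₀, rfl⟩
  · rw [ext_zero]; exact hrow j
  · by_cases hl : j = Fin.last n
    · subst hl
      rw [ext_succ_last]
      exact h.1 i₀.succ (Fin.last n) (by simp only [Fin.val_succ, Fin.val_last]; omega)
    · obtain ⟨j₀, rfl⟩ := Fin.exists_castSucc_eq.mpr hl
      rw [ext_succ_cast]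
      rfl

lemma cell0 {F : Grid (n+1)} (h : IsMCT (n+1) F) (j₀ : Fin n) :
    (ForcedEmpty (n+1) F 0 j₀.castSucc → F 0 j₀.castSucc = none) ∧
    (¬ ForcedEmpty (n+1) F 0 j₀.castSucc →
      MatchOK (F 0 (Fin.last n)) (diagCol n (res n F) j₀) (F 0 j₀.castSucc)) := by
  have hc := ((isMCT_def _).mp h).2.2 0 j₀.castSucc
    (by simp only [Fin.val_zero, Fin.coe_castSucc, Nat.zero_add, Nat.add_sub_cancel]
        exact j₀.isLt)
  rwa [diagRow_zero, ← diagCol_res] at hc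

lemma classify_b {F : Grid (n+1)} (h : IsMCT (n+1) F) (hb : F 0 (Fin.last n) = some MSym.b) :
    F = ext n (res n F) (rowE n) := by
  refine eq_ext h _ (fun j => ?_)
  by_cases hl : j = Fin.last n
  · subst hl; rw [rowE_last, hb]
  · obtain ⟨j₀, rfl⟩ := Fin.exists_castSucc_eq.mpr hl
    rw [rowE_cast]
    exact (cell0 h j₀).1 (Or.inl ⟨Fin.last n, Fin.castSucc_lt_last j₀, hb⟩)

lemma classify_x {F : Grid (n+1)} (h : IsMCT (n+1) F) (hx : F 0 (Fin.last n) = some MSym.x) :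
    F = ext n (res n F) (rowX n (res n F)) := by
  have hnb : ∀ j₀ : Fin n, F 0 j₀.castSucc ≠ some MSym.b := by
    intro j₀ hb
    by_cases hf : ForcedEmpty (n+1) F 0 j₀.castSucc
    · rw [(cell0 h j₀).1 hf] at hb; exact nomatch hb
    · have hm := (cell0 h j₀).2 hf
      rw [hx, hb] at hm
      rcases hd : diagCol n (res n F) j₀ with - | c
      · rw [hd] at hm; simp [MatchOK] at hm
      · cases c <;> rw [hd] at hm <;> simp [MatchOK] at hm
  have hforced : ∀ j₀ : Fin n,
      ForcedEmpty (n+1) F 0 j₀.castSucc ↔ colHasA n (res n F) j₀ := by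
    intro j₀
    rw [forced_zero]
    constructor
    · rintro (⟨j₁, -, hb⟩ | hb | hc)
      · exact absurd hb (hnb j₁)
      · rw [hx] at hb; simp at hb
      · exact hc
    · exact fun hc => Or.inr (Or.inr hc)
  refine eq_ext h _ (fun j => ?_)
  by_cases hl : j = Fin.last n
  · subst hl; rw [rowX_last, hx]
  · obtain ⟨j₀, rfl⟩ := Fin.exists_castSucc_eq.mpr hl
    rw [rowX_cast]
    by_cases hav : j₀ ∈ avail n (res n F)
    · rw [if_pos hav]
      have hnf : ¬ ForcedEmpty (n+1) F 0 j₀.castSucc := by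
        rw [hforced]; exact (mem_avail.mp hav).2
      have hm := (cell0 h j₀).2 hnf
      rw [hx, (mem_avail.mp hav).1] at hm
      exact hm
    · rw [if_neg hav]
      by_cases hf : ForcedEmpty (n+1) F 0 j₀.castSucc
      · exact (cell0 h j₀).1 hf
      · have hm := (cell0 h j₀).2 hf
        rw [hx] at hm
        have hnc : ¬ colHasA n (res n F) j₀ := fun hc => hf ((hforced j₀).mpr hc)
        rcases hd : diagCol n (res n F) j₀ with - | c
        · rw [hd] at hm; exact hm
        · cases c
          · rw [hd] at hm; exact hm
          · exact absurd (mem_avail.mpr ⟨hd, hnc⟩) hav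
          · rw [hd] at hm; exact hm

lemma classify_a {F : Grid (n+1)} (h : IsMCT (n+1) F) (ha : F 0 (Fin.last n) = some MSym.a) :
    ∃ p, validD n (res n F) p ∧ F = ext n (res n F) (rowD n (res n F) p) := by
  have huniq : ∀ j₁ j₂ : Fin n, F 0 j₁.castSucc = some MSym.b → F 0 j₂.castSucc = some MSym.b →
      j₁ = j₂ := by
    intro j₁ j₂ h1 h2
    by_contra hne
    rcases lt_or_gt_of_ne hne with hlt | hlt
    all_goals {
      first
      | (have hf : ForcedEmpty (n+1) F 0 j₁.castSucc :=
          Or.inl ⟨j₂.castSucc, by simpa using hlt, h2⟩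
         rw [(cell0 h j₁).1 hf] at h1; exact nomatch h1)
      | (have hf : ForcedEmpty (n+1) F 0 j₂.castSucc :=
          Or.inl ⟨j₁.castSucc, by simpa using hlt, h1⟩
         rw [(cell0 h j₂).1 hf] at h2; exact nomatch h2) }
  by_cases hbex : ∃ j₀ : Fin n, F 0 j₀.castSucc = some MSym.b
  · obtain ⟨q, hq⟩ := hbex
    have hforced : ∀ j₀ : Fin n,
        ForcedEmpty (n+1) F 0 j₀.castSucc ↔ (j₀ < q ∨ colHasA n (res n F) j₀) := by
      intro j₀
      rw [forced_zero]
      constructor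
      · rintro (⟨j₁, hj₁, hb⟩ | hb | hc)
        · exact Or.inl ((huniq j₁ q hb hq) ▸ (by simpa using hj₁))
        · rw [ha] at hb; simp at hb
        · exact Or.inr hc
      · rintro (hlt | hc)
        · exact Or.inl ⟨q, hlt, hq⟩
        · exact Or.inr (Or.inr hc)
    have hnfq : ¬ ForcedEmpty (n+1) F 0 q.castSucc := by
      intro hf
      rw [(cell0 h q).1 hf] at hq; exact nomatch hq
    have hncq : ¬ colHasA n (res n F) q := fun hc => hnfq ((hforced q).mpr (Or.inr hc))
    have hmq := (cell0 h q).2 hnfq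
    rw [ha, hq] at hmq
    -- q's column is E (avail) or x; and if x it is maximal
    have hnox : ∀ j₀ : Fin n, q < j₀ → diagCol n (res n F) j₀ ≠ some MSym.x := by
      intro j₀ hlt hd
      have hnc : ¬ colHasA n (res n F) j₀ := by
        rintro ⟨i, hai⟩
        exact xcol_no_a (isMCT_res h) hd i hai
      have hnf : ¬ ForcedEmpty (n+1) F 0 j₀.castSucc := by
        rw [hforced]
        rintro (h1 | h2)
        · exact absurd (h1.trans hlt) (lt_irrefl _)
        · exact hnc h2
      have hm := (cell0 h j₀).2 hnf
      rw [ha, hd] at hm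
      have hm' : F 0 j₀.castSucc = some MSym.b := hm
      have heq := huniq j₀ q hm' hq
      rw [heq] at hlt
      exact absurd hlt (lt_irrefl _)
    have hvq : validD n (res n F) (some q) := by
      rcases hdq : diagCol n (res n F) q with - | c
      · rw [hdq] at hmq; simp [MatchOK] at hmq
      · cases c
        · rw [hdq] at hmq; simp [MatchOK] at hmq
        · exact Or.inl (mem_avail.mpr ⟨hdq, hncq⟩)
        · exact Or.inr ⟨hdq, hnox⟩
    refine ⟨some q, hvq, eq_ext h _ (fun j => ?_)⟩
    by_cases hl : j = Fin.last n
    · subst hl; rw [rowD_last, ha]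
    · obtain ⟨j₀, rfl⟩ := Fin.exists_castSucc_eq.mpr hl
      rw [rowD_some_cast]
      rcases lt_trichotomy j₀ q with h1 | rfl | h1
      · rw [if_neg (by rintro rfl; exact absurd h1 (lt_irrefl _)),
          if_neg (by rintro ⟨h2, -⟩; exact absurd (h2.trans h1) (lt_irrefl _))]
        exact (cell0 h j₀).1 ((hforced j₀).mpr (Or.inl h1))
      · rw [if_pos rfl]; exact hq
      · rw [if_neg (by rintro rfl; exact absurd h1 (lt_irrefl _))]
        by_cases hav : j₀ ∈ avail n (res n F)
        · rw [if_pos ⟨h1, hav⟩]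
          have hnf : ¬ ForcedEmpty (n+1) F 0 j₀.castSucc := by
            rw [hforced]
            rintro (h2 | h2)
            · exact absurd (h1.trans h2) (lt_irrefl _)
            · exact (mem_avail.mp hav).2 h2
          have hm := (cell0 h j₀).2 hnf
          rw [ha, (mem_avail.mp hav).1] at hm
          rcases hm with hm | hm
          · exact hm
          · exact absurd (huniq j₀ q hm hq) (by rintro rfl; exact absurd h1 (lt_irrefl _))
        · rw [if_neg (by rintro ⟨-, h2⟩; exact hav h2)]
          by_cases hf : ForcedEmpty (n+1) F 0 j₀.castSucc
          · exact (cell0 h j₀).1 hf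
          · have hm := (cell0 h j₀).2 hf
            have hnc : ¬ colHasA n (res n F) j₀ := fun hc => hf ((hforced j₀).mpr (Or.inr hc))
            rw [ha] at hm
            rcases hd : diagCol n (res n F) j₀ with - | c
            · rw [hd] at hm; exact hm
            · cases c
              · rw [hd] at hm; exact hm
              · exact absurd (mem_avail.mpr ⟨hd, hnc⟩) hav
              · exact absurd hd (hnox j₀ h1)
  · push_neg at hbex
    have hforced : ∀ j₀ : Fin n,
        ForcedEmpty (n+1) F 0 j₀.castSucc ↔ colHasA n (res n F) j₀ := by
      intro j₀
      rw [forced_zero]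
      constructor
      · rintro (⟨j₁, -, hb⟩ | hb | hc)
        · exact absurd hb (hbex j₁)
        · rw [ha] at hb; simp at hb
        · exact hc
      · exact fun hc => Or.inr (Or.inr hc)
    have hvnone : validD n (res n F) none := by
      intro j₀ hd
      have hnc : ¬ colHasA n (res n F) j₀ := by
        rintro ⟨i, hai⟩
        exact xcol_no_a (isMCT_res h) hd i hai
      have hnf : ¬ ForcedEmpty (n+1) F 0 j₀.castSucc := fun hf => hnc ((hforced j₀).mp hf)
      have hm := (cell0 h j₀).2 hnf
      rw [ha, hd] at hm
      exact hbex j₀ hm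
    refine ⟨none, hvnone, eq_ext h _ (fun j => ?_)⟩
    by_cases hl : j = Fin.last n
    · subst hl; rw [rowD_last, ha]
    · obtain ⟨j₀, rfl⟩ := Fin.exists_castSucc_eq.mpr hl
      rw [rowD_none_cast]
      by_cases hav : j₀ ∈ avail n (res n F)
      · rw [if_pos hav]
        have hnf : ¬ ForcedEmpty (n+1) F 0 j₀.castSucc := by
          rw [hforced]; exact (mem_avail.mp hav).2
        have hm := (cell0 h j₀).2 hnf
        rw [ha, (mem_avail.mp hav).1] at hm
        rcases hm with hm | hm
        · exact hm
        · exact absurd hm (hbex j₀)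
      · rw [if_neg hav]
        by_cases hf : ForcedEmpty (n+1) F 0 j₀.castSucc
        · exact (cell0 h j₀).1 hf
        · have hm := (cell0 h j₀).2 hf
          have hnc : ¬ colHasA n (res n F) j₀ := fun hc => hf ((hforced j₀).mpr hc)
          rw [ha] at hm
          rcases hd : diagCol n (res n F) j₀ with - | c
          · rw [hd] at hm; exact hm
          · cases c
            · rw [hd] at hm; exact hm
            · exact absurd (mem_avail.mpr ⟨hd, hnc⟩) hav
            · exact absurd (hvnone j₀ hd) (fun hh => hh)  -- contradiction: validD none says no x
lemma cntP_pos {F' : Grid n} {q : Fin n} (hq : q ∈ avail n F') : 0 < cntP n F' (some q) := by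
  apply card_pos.mpr
  exact ⟨q, mem_filter.mpr ⟨hq, le_refl q⟩⟩

lemma cntP_xcol {F' : Grid n} (h : IsMCT n F') {q : Fin n}
    (hx : diagCol n F' q = some MSym.x) : cntP n F' (some q) = 0 := by
  apply card_eq_zero.mpr
  apply filter_eq_empty_iff.mpr
  intro z hz hle
  exact absurd (aCol_lt_avail h hz hx) (not_lt.mpr hle)

lemma cntP_mono {F' : Grid n} {q q' : Fin n} (hq : q ∈ avail n F') (hq' : q' ∈ avail n F')
    (hlt : q < q') : cntP n F' (some q) < cntP n F' (some q') := by
  apply card_lt_card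
  constructor
  · intro z hz
    rcases mem_filter.mp hz with ⟨h1, h2⟩
    exact mem_filter.mpr ⟨h1, h2.trans hlt.le⟩
  · intro hsub
    have := hsub (mem_filter.mpr ⟨hq', le_refl q'⟩)
    exact absurd (mem_filter.mp this).2 (not_le.mpr hlt)

lemma cntP_inj {F' : Grid n} (h : IsMCT n F') {p p' : Option (Fin n)}
    (hp : validD n F' p) (hp' : validD n F' p') (he : cntP n F' p = cntP n F' p') : p = p' := by
  have key : ∀ q q' : Fin n, validD n F' (some q) → validD n F' (some q') →
      cntP n F' (some q) = cntP n F' (some q') → q < q' → False := by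
    intro q q' hvq hvq' heq hlt
    rcases hvq' with hq' | ⟨hx', -⟩
    · rcases hvq with hq | ⟨hx, -⟩
      · exact absurd heq (Nat.ne_of_lt (cntP_mono hq hq' hlt))
      · rw [cntP_xcol h hx] at heq
        exact absurd heq.symm (cntP_pos hq').ne'
    · rcases hvq with hq | ⟨hx, hmax⟩
      · exact absurd (aCol_lt_avail h hq hx') (by omega)
      · exact hmax q' hlt hx'
  match p, p' with
  | none, none => rfl
  | none, some q' =>
    exfalso
    rcases hp' with hq' | ⟨hx', -⟩
    · exact absurd he.symm (cntP_pos hq').ne'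
    · exact hp q' hx'
  | some q, none =>
    exfalso
    rcases hp with hq | ⟨hx, -⟩
    · exact absurd he (cntP_pos hq).ne'
    · exact hp' q hx
  | some q, some q' =>
    congr 1
    rcases lt_trichotomy q q' with hlt | heq | hlt
    · exact absurd (key q q' hp hp' he hlt) (fun hh => hh)
    · exact heq
    · exact absurd (key q' q hp' hp he.symm hlt) (fun hh => hh)

lemma exists_nth (s : Finset (Fin n)) (k : ℕ) (hk : k < s.card) :
    ∃ q ∈ s, (s.filter (fun x => x ≤ q)).card = k + 1 := by
  let e := s.orderIsoOfFin rfl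
  refine ⟨(e ⟨k, hk⟩ : Fin n), (e ⟨k, hk⟩).2, ?_⟩
  have himg : s.filter (fun x => x ≤ (e ⟨k, hk⟩ : Fin n)) =
      (Finset.Iic (⟨k, hk⟩ : Fin s.card)).image (fun i => (e i : Fin n)) := by
    ext z
    simp only [mem_filter, mem_image, Finset.mem_Iic]
    constructor
    · rintro ⟨hz, hle⟩
      refine ⟨e.symm ⟨z, hz⟩, ?_, by simp⟩
      have : e (e.symm ⟨z, hz⟩) ≤ e ⟨k, hk⟩ := by
        simp only [OrderIso.apply_symm_apply]
        exact Subtype.coe_le_coe.mp hle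
      exact e.le_iff_le.mp this
    · rintro ⟨i, hle, rfl⟩
      exact ⟨(e i).2, Subtype.coe_le_coe.mpr (e.le_iff_le.mpr hle)⟩
  rw [himg, card_image_of_injective _ (fun i₁ i₂ hi => e.injective (Subtype.ext hi))]
  rw [Fin.card_Iic]

lemma exists_validD {F' : Grid n} (h : IsMCT n F') {m : ℕ} (hm : m ≤ statF n F') :
    ∃ p, validD n F' p ∧ cntP n F' p = m := by
  cases m with
  | zero =>
    by_cases hx : ∃ j, diagCol n F' j = some MSym.x
    · have hne : (univ.filter (fun j => diagCol n F' j = some MSym.x)).Nonempty := by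
        obtain ⟨j, hj⟩ := hx
        exact ⟨j, mem_filter.mpr ⟨mem_univ j, hj⟩⟩
      set q := (univ.filter (fun j => diagCol n F' j = some MSym.x)).max' hne with hqdef
      have hqx : diagCol n F' q = some MSym.x :=
        (mem_filter.mp ((univ.filter _).max'_mem hne)).2
      refine ⟨some q, Or.inr ⟨hqx, fun j hj hjx => ?_⟩, cntP_xcol h hqx⟩
      have : j ≤ q := Finset.le_max' _ j (mem_filter.mpr ⟨mem_univ j, hjx⟩)
      omega
    · push_neg at hx
      exact ⟨none, hx, rfl⟩
  | succ k =>
    obtain ⟨q, hq, hcard⟩ := exists_nth (avail n F') k hm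
    exact ⟨some q, Or.inl hq, hcard⟩

noncomputable def pick (n : ℕ) (F' : Grid n) (m : ℕ) : Option (Fin n) :=
  if h : ∃ p, validD n F' p ∧ cntP n F' p = m then h.choose else none

lemma pick_spec {F' : Grid n} (h : IsMCT n F') {m : ℕ} (hm : m ≤ statF n F') :
    validD n F' (pick n F' m) ∧ cntP n F' (pick n F' m) = m := by
  have hex := exists_validD h hm
  rw [pick, dif_pos hex]
  exact hex.choose_spec
noncomputable def DS (n r m : ℕ) : Finset (Grid n) :=
  univ.filter fun F' => IsMCT n F' ∧ cA n F' = r ∧ m ≤ statF n F'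

lemma isMCT_extD {F' : Grid n} (h : IsMCT n F') {p} (hv : validD n F' p) :
    IsMCT (n+1) (ext n F' (rowD n F' p)) := by
  cases p with
  | none => exact isMCT_extD_none h hv
  | some q => exact isMCT_extD_some h hv

lemma stat_extD (F' : Grid n) (p) :
    statF (n+1) (ext n F' (rowD n F' p)) = cntP n F' p := by
  cases p with
  | none => rw [stat_extD_none]; rfl
  | some q => exact stat_extD_some F' q

lemma cntP_le (F' : Grid n) (p) : cntP n F' p ≤ statF n F' := by
  cases p with
  | none => exact Nat.zero_le _
  | some q => exact card_le_card (filter_subset _ _)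

lemma card_fib_b (n r m : ℕ) :
    ((TC (n+1) r (m+1)).filter (fun F => F 0 (Fin.last n) = some MSym.b)).card
      = (TC n r m).card := by
  apply card_nbij' (res n) (fun F' => ext n F' (rowE n))
  · intro F hF
    rcases mem_filter.mp hF with ⟨hTC, hb⟩
    rcases mem_filter.mp hTC with ⟨-, hM, hcA, hst⟩
    have hcl := classify_b hM hb
    rw [hcl, cA_extE] at hcA
    rw [hcl, stat_extE] at hst
    exact mem_filter.mpr ⟨mem_univ _, isMCT_res hM, hcA, by omega⟩
  · intro F' hF'
    rcases mem_filter.mp hF' with ⟨-, hM, hcA, hst⟩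
    refine mem_filter.mpr ⟨mem_filter.mpr ⟨mem_univ _, isMCT_extE hM, ?_, ?_⟩, ?_⟩
    · rw [cA_extE]; exact hcA
    · rw [stat_extE, hst]
    · beta_reduce; rw [ext_zero, rowE_last]
  · intro F hF
    rcases mem_filter.mp hF with ⟨hTC, hb⟩
    exact (classify_b (mem_filter.mp hTC).2.1 hb).symm
  · intro F' _
    exact res_ext F' _

lemma card_fib_b_zero (n r : ℕ) :
    ((TC (n+1) r 0).filter (fun F => F 0 (Fin.last n) = some MSym.b)).card = 0 := by
  rw [card_eq_zero, filter_eq_empty_iff]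
  intro F hTC hb
  rcases mem_filter.mp hTC with ⟨-, hM, -, hst⟩
  rw [classify_b hM hb, stat_extE] at hst
  omega

lemma card_fib_x (n r : ℕ) :
    ((TC (n+1) (r+1) 0).filter (fun F => F 0 (Fin.last n) = some MSym.x)).card
      = (NS n r).card := by
  apply card_nbij' (res n) (fun F' => ext n F' (rowX n F'))
  · intro F hF
    rcases mem_filter.mp hF with ⟨hTC, hx⟩
    rcases mem_filter.mp hTC with ⟨-, hM, hcA, -⟩
    have hcl := classify_x hM hx
    rw [hcl, cA_extX] at hcA
    exact mem_filter.mpr ⟨mem_univ _, isMCT_res hM, by omega⟩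
  · intro F' hF'
    rcases mem_filter.mp hF' with ⟨-, hM, hcA⟩
    refine mem_filter.mpr ⟨mem_filter.mpr ⟨mem_univ _, isMCT_extX hM, ?_, ?_⟩, ?_⟩
    · rw [cA_extX, hcA]
    · rw [stat_extX]
    · beta_reduce; rw [ext_zero, rowX_last]
  · intro F hF
    rcases mem_filter.mp hF with ⟨hTC, hx⟩
    exact (classify_x (mem_filter.mp hTC).2.1 hx).symm
  · intro F' _
    exact res_ext F' _

lemma card_fib_x_rzero (n m : ℕ) :
    ((TC (n+1) 0 m).filter (fun F => F 0 (Fin.last n) = some MSym.x)).card = 0 := by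
  rw [card_eq_zero, filter_eq_empty_iff]
  intro F hTC hx
  rcases mem_filter.mp hTC with ⟨-, hM, hcA, -⟩
  rw [classify_x hM hx, cA_extX] at hcA
  omega

lemma card_fib_x_mpos (n r m : ℕ) :
    ((TC (n+1) r (m+1)).filter (fun F => F 0 (Fin.last n) = some MSym.x)).card = 0 := by
  rw [card_eq_zero, filter_eq_empty_iff]
  intro F hTC hx
  rcases mem_filter.mp hTC with ⟨-, hM, -, hst⟩
  rw [classify_x hM hx, stat_extX] at hst
  omega

lemma card_fib_a (n r m : ℕ) :
    ((TC (n+1) r m).filter (fun F => F 0 (Fin.last n) = some MSym.a)).card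
      = (DS n r m).card := by
  apply card_nbij' (res n) (fun F' => ext n F' (rowD n F' (pick n F' m)))
  · intro F hF
    rcases mem_filter.mp hF with ⟨hTC, ha⟩
    rcases mem_filter.mp hTC with ⟨-, hM, hcA, hst⟩
    obtain ⟨p, hv, hcl⟩ := classify_a hM ha
    rw [hcl, cA_extD] at hcA
    rw [hcl, stat_extD] at hst
    refine mem_filter.mpr ⟨mem_univ _, isMCT_res hM, hcA, ?_⟩
    rw [← hst]
    exact cntP_le _ _
  · intro F' hF'
    rcases mem_filter.mp hF' with ⟨-, hM, hcA, hst⟩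
    obtain ⟨hv, hcnt⟩ := pick_spec hM hst
    refine mem_filter.mpr ⟨mem_filter.mpr ⟨mem_univ _, isMCT_extD hM hv, ?_, ?_⟩, ?_⟩
    · rw [cA_extD]; exact hcA
    · rw [stat_extD, hcnt]
    · beta_reduce; rw [ext_zero, rowD_last]
  · intro F hF
    rcases mem_filter.mp hF with ⟨hTC, ha⟩
    rcases mem_filter.mp hTC with ⟨-, hM, hcA, hst⟩
    obtain ⟨p, hv, hcl⟩ := classify_a hM ha
    have hstp : cntP n (res n F) p = m := by
      rw [hcl, stat_extD] at hst; exact hst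
    have hstle : m ≤ statF n (res n F) := hstp ▸ cntP_le _ _
    obtain ⟨hv', hcnt'⟩ := pick_spec (isMCT_res hM) hstle
    have : pick n (res n F) m = p := cntP_inj (isMCT_res hM) hv' hv (by rw [hcnt', hstp])
    beta_reduce; rw [this]
    exact hcl.symm
  · intro F' _
    exact res_ext F' _

lemma card_TC_split (n r m : ℕ) : (TC (n+1) r m).card =
    ((TC (n+1) r m).filter (fun F => F 0 (Fin.last n) = some MSym.a)).card +
    ((TC (n+1) r m).filter (fun F => F 0 (Fin.last n) = some MSym.b)).card +
    ((TC (n+1) r m).filter (fun F => F 0 (Fin.last n) = some MSym.x)).card := by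
  have key : ∀ F ∈ TC (n+1) r m, F 0 (Fin.last n) = some MSym.a ∨
      F 0 (Fin.last n) = some MSym.b ∨ F 0 (Fin.last n) = some MSym.x := by
    intro F hF
    rcases mem_filter.mp hF with ⟨-, hM, -⟩
    rcases hd : F 0 (Fin.last n) with - | c
    · exact absurd (by rw [diagRow_zero]; exact hd) (hM.2.1 0)
    · cases c
      · exact Or.inl rfl
      · exact Or.inr (Or.inl rfl)
      · exact Or.inr (Or.inr rfl)
  have h1 := card_filter_add_card_filter_not
    (s := TC (n+1) r m) (p := fun F => F 0 (Fin.last n) = some MSym.a)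
  have h2 := card_filter_add_card_filter_not
    (s := (TC (n+1) r m).filter (fun F => ¬ F 0 (Fin.last n) = some MSym.a))
    (p := fun F => F 0 (Fin.last n) = some MSym.b)
  have e1 : ((TC (n+1) r m).filter (fun F => ¬ F 0 (Fin.last n) = some MSym.a)).filter
      (fun F => F 0 (Fin.last n) = some MSym.b)
      = (TC (n+1) r m).filter (fun F => F 0 (Fin.last n) = some MSym.b) := by
    rw [filter_filter]
    apply filter_congr
    intro F _
    constructor
    · exact fun hh => hh.2
    · exact fun hh => ⟨by rw [hh]; simp, hh⟩
  have e2 : ((TC (n+1) r m).filter (fun F => ¬ F 0 (Fin.last n) = some MSym.a)).filter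
      (fun F => ¬ F 0 (Fin.last n) = some MSym.b)
      = (TC (n+1) r m).filter (fun F => F 0 (Fin.last n) = some MSym.x) := by
    rw [filter_filter]
    apply filter_congr
    intro F hF
    constructor
    · rintro ⟨hna, hnb⟩
      rcases key F hF with hh | hh | hh
      · exact absurd hh hna
      · exact absurd hh hnb
      · exact hh
    · intro hh
      rw [hh]
      constructor <;> simp
  rw [← h1, ← h2, e1, e2, Nat.add_assoc]

lemma card_DS (n r m : ℕ) : (DS n r m).card = ∑ m₀ ∈ Finset.Icc m n, (TC n r m₀).card := by
  rw [card_eq_sum_card_fiberwise (f := statF n) (t := Finset.Icc m n)]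
  · apply Finset.sum_congr rfl
    intro m₀ hm₀
    congr 1
    unfold DS TC
    rw [filter_filter]
    apply filter_congr
    intro F _
    rcases Finset.mem_Icc.mp hm₀ with ⟨h1, -⟩
    constructor
    · rintro ⟨⟨hM, hcA, -⟩, hst⟩
      exact ⟨hM, hcA, hst⟩
    · rintro ⟨hM, hcA, hst⟩
      exact ⟨⟨hM, hcA, by omega⟩, hst⟩
  · intro F hF
    rcases mem_filter.mp hF with ⟨-, -, -, hst⟩
    refine Finset.mem_Icc.mpr ⟨hst, ?_⟩
    calc statF n F ≤ (univ : Finset (Fin n)).card := card_le_card (subset_univ _) |>.trans (le_refl _)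
    _ = n := by simp

lemma card_NS (n r : ℕ) : (NS n r).card = ∑ m₀ ∈ Finset.range (n+1), (TC n r m₀).card := by
  rw [card_eq_sum_card_fiberwise (f := statF n) (t := Finset.range (n+1))]
  · apply Finset.sum_congr rfl
    intro m₀ _
    congr 1
    unfold NS TC
    rw [filter_filter]
    apply filter_congr
    intro F _
    constructor
    · rintro ⟨⟨hM, hcA⟩, hst⟩
      exact ⟨hM, hcA, hst⟩
    · rintro ⟨hM, hcA, hst⟩
      exact ⟨⟨hM, hcA⟩, hst⟩
  · intro F hF
    refine Finset.mem_range.mpr ?_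
    have : statF n F ≤ (univ : Finset (Fin n)).card := card_le_card (subset_univ _)
    simp at this
    omega
def Mrec : ℕ → ℕ → ℕ → ℕ
  | 0, r, m => if r = 0 ∧ m = 0 then 1 else 0
  | (n+1), r, 0 =>
      (match r with
       | 0 => 0
       | (r'+1) => ∑ m₀ ∈ Finset.range (n+1), Mrec n r' m₀) + ∑ m₀ ∈ Finset.Icc 0 n, Mrec n r m₀
  | (n+1), r, (m+1) => Mrec n r m + ∑ m₀ ∈ Finset.Icc (m+1) n, Mrec n r m₀

lemma card_TC_zero (r m : ℕ) : (TC 0 r m).card = if r = 0 ∧ m = 0 then 1 else 0 := by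
  have hM : ∀ F : Grid 0, IsMCT 0 F := fun F => ⟨fun i => i.elim0, fun i => i.elim0, fun i => i.elim0⟩
  have hcA : ∀ F : Grid 0, cA 0 F = 0 := fun F => by
    unfold cA typeWord
    simp
  have hst : ∀ F : Grid 0, statF 0 F = 0 := fun F => by
    unfold statF
    exact Nat.le_zero.mp ((card_le_card (subset_univ _)).trans (by simp))
  unfold TC
  by_cases h : r = 0 ∧ m = 0
  · rw [if_pos h]
    rw [filter_true_of_mem (fun F _ => ⟨hM F, by rw [hcA F, h.1], by rw [hst F, h.2]⟩)]
    rw [Finset.card_univ]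
    simp [Fintype.card_fun]
  · rw [if_neg h]
    rw [card_eq_zero, filter_eq_empty_iff]
    rintro F - ⟨-, h1, h2⟩
    rw [hcA F] at h1
    rw [hst F] at h2
    exact h ⟨h1.symm, h2.symm⟩

lemma card_TC_eq (n : ℕ) : ∀ r m, (TC n r m).card = Mrec n r m := by
  induction n with
  | zero =>
    intro r m
    rw [card_TC_zero]
    rfl
  | succ n ih =>
    intro r m
    cases m with
    | zero =>
      cases r with
      | zero =>
        rw [card_TC_split, card_fib_b_zero, card_fib_x_rzero, card_fib_a, card_DS]
        have hA : ∑ m₀ ∈ Finset.Icc 0 n, (TC n 0 m₀).card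
            = ∑ m₀ ∈ Finset.Icc 0 n, Mrec n 0 m₀ :=
          Finset.sum_congr rfl (fun m₀ _ => ih 0 m₀)
        show ∑ m₀ ∈ Finset.Icc 0 n, (TC n 0 m₀).card + 0 + 0 = Mrec (n+1) 0 0
        rw [hA]
        show _ = 0 + ∑ m₀ ∈ Finset.Icc 0 n, Mrec n 0 m₀
        omega
      | succ r' =>
        rw [card_TC_split, card_fib_b_zero, card_fib_x, card_fib_a, card_DS, card_NS]
        have hA : ∑ m₀ ∈ Finset.Icc 0 n, (TC n (r'+1) m₀).card
            = ∑ m₀ ∈ Finset.Icc 0 n, Mrec n (r'+1) m₀ :=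
          Finset.sum_congr rfl (fun m₀ _ => ih (r'+1) m₀)
        have hX : ∑ m₀ ∈ Finset.range (n+1), (TC n r' m₀).card
            = ∑ m₀ ∈ Finset.range (n+1), Mrec n r' m₀ :=
          Finset.sum_congr rfl (fun m₀ _ => ih r' m₀)
        show ∑ m₀ ∈ Finset.Icc 0 n, (TC n (r'+1) m₀).card + 0
            + ∑ m₀ ∈ Finset.range (n+1), (TC n r' m₀).card = Mrec (n+1) (r'+1) 0
        rw [hA, hX]
        show _ = ∑ m₀ ∈ Finset.range (n+1), Mrec n r' m₀ + ∑ m₀ ∈ Finset.Icc 0 n, Mrec n (r'+1) m₀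
        omega
    | succ m' =>
      rw [card_TC_split, card_fib_b, card_fib_x_mpos, card_fib_a, card_DS]
      have hA : ∑ m₀ ∈ Finset.Icc (m'+1) n, (TC n r m₀).card
          = ∑ m₀ ∈ Finset.Icc (m'+1) n, Mrec n r m₀ :=
        Finset.sum_congr rfl (fun m₀ _ => ih r m₀)
      show ∑ m₀ ∈ Finset.Icc (m'+1) n, (TC n r m₀).card + (TC n r m').card + 0
          = Mrec (n+1) r (m'+1)
      rw [hA, ih r m']
      show _ = Mrec n r m' + ∑ m₀ ∈ Finset.Icc (m'+1) n, Mrec n r m₀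
      omega
lemma Mrec_succ_zero_zero (n : ℕ) : Mrec (n+1) 0 0 = ∑ m₀ ∈ Finset.Icc 0 n, Mrec n 0 m₀ := by
  show 0 + _ = _
  rw [Nat.zero_add]

lemma Mrec_succ_zero_succ (n r' : ℕ) : Mrec (n+1) (r'+1) 0
    = ∑ m₀ ∈ Finset.range (n+1), Mrec n r' m₀ + ∑ m₀ ∈ Finset.Icc 0 n, Mrec n (r'+1) m₀ := rfl

lemma Mrec_succ_succ (n r m : ℕ) : Mrec (n+1) r (m+1)
    = Mrec n r m + ∑ m₀ ∈ Finset.Icc (m+1) n, Mrec n r m₀ := rfl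

lemma Mrec_zero : ∀ n r m, n < m + r → Mrec n r m = 0 := by
  intro n
  induction n with
  | zero =>
    intro r m h
    show (if r = 0 ∧ m = 0 then 1 else 0) = 0
    rw [if_neg (by omega)]
  | succ n ih =>
    intro r m h
    cases m with
    | zero =>
      cases r with
      | zero => omega
      | succ r' =>
        rw [Mrec_succ_zero_succ,
          Finset.sum_eq_zero (fun m₀ _ => ih r' m₀ (by omega)),
          Finset.sum_eq_zero (fun m₀ _ => ih (r'+1) m₀ (by omega))]
        rfl
    | succ m' =>
      rw [Mrec_succ_succ, ih r m' (by omega), Finset.sum_eq_zero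
        (fun m₀ hm₀ => ih r m₀ (by rcases Finset.mem_Icc.mp hm₀ with ⟨h1, -⟩; omega))]
      rfl

lemma sum_Mrec (n : ℕ)
    (hc : ∀ r m, m + r ≤ n → Mrec n r m + Nat.choose (2*n - m) (n + r + 1)
      = Nat.choose (2*n - m) (n - r - m)) :
    ∀ r a, a + r ≤ n →
      (∑ m₀ ∈ Finset.Icc a n, Mrec n r m₀) + Nat.choose (2*n - a + 1) (n + r + 2)
        = Nat.choose (2*n - a + 1) (n + r + 1) := by
  intro r a ha
  have h1 : ∑ m₀ ∈ Finset.Icc a n, Mrec n r m₀ = ∑ m₀ ∈ Finset.Icc a (n - r), Mrec n r m₀ := by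
    rw [eq_comm]
    apply Finset.sum_subset
    · intro z hz
      rcases Finset.mem_Icc.mp hz with ⟨hz1, hz2⟩
      exact Finset.mem_Icc.mpr ⟨hz1, by omega⟩
    · intro z hz hz'
      rcases Finset.mem_Icc.mp hz with ⟨hz1, hz2⟩
      apply Mrec_zero
      have : ¬ (a ≤ z ∧ z ≤ n - r) := fun hh => hz' (Finset.mem_Icc.mpr hh)
      omega
  have h2 : ∀ m₀ ∈ Finset.Icc a (n - r), Mrec n r m₀ + Nat.choose (2*n - m₀) (n + r + 1)
      = Nat.choose (2*n - m₀) (n + r) := by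
    intro m₀ hm₀
    rcases Finset.mem_Icc.mp hm₀ with ⟨h1', h2'⟩
    have hle : m₀ + r ≤ n := by omega
    rw [hc r m₀ hle]
    have : n - r - m₀ = (2*n - m₀) - (n + r) := by omega
    rw [this]
    exact Nat.choose_symm (by omega)
  have h3 : (∑ m₀ ∈ Finset.Icc a (n - r), Mrec n r m₀)
      + ∑ m₀ ∈ Finset.Icc a (n - r), Nat.choose (2*n - m₀) (n + r + 1)
      = ∑ m₀ ∈ Finset.Icc a (n - r), Nat.choose (2*n - m₀) (n + r) := by
    rw [← Finset.sum_add_distrib]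
    exact Finset.sum_congr rfl h2
  have h4 : ∀ k : ℕ, ∑ m₀ ∈ Finset.Icc a (n - r), Nat.choose (2*n - m₀) k
      = ∑ i ∈ Finset.Icc (n + r) (2*n - a), Nat.choose i k := by
    intro k
    apply Finset.sum_nbij' (fun m₀ => 2*n - m₀) (fun i => 2*n - i)
    · intro m₀ hm₀
      rcases Finset.mem_Icc.mp hm₀ with ⟨h1', h2'⟩
      exact Finset.mem_Icc.mpr ⟨by omega, by omega⟩
    · intro i hi
      rcases Finset.mem_Icc.mp hi with ⟨h1', h2'⟩
      exact Finset.mem_Icc.mpr ⟨by omega, by omega⟩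
    · intro m₀ hm₀
      rcases Finset.mem_Icc.mp hm₀ with ⟨h1', h2'⟩
      omega
    · intro i hi
      rcases Finset.mem_Icc.mp hi with ⟨h1', h2'⟩
      omega
    · intro m₀ _
      rfl
  have h5 : ∑ i ∈ Finset.Icc (n + r) (2*n - a), Nat.choose i (n + r + 1)
      = ∑ i ∈ Finset.Icc (n + r + 1) (2*n - a), Nat.choose i (n + r + 1) := by
    rw [eq_comm]
    apply Finset.sum_subset
    · intro z hz
      rcases Finset.mem_Icc.mp hz with ⟨hz1, hz2⟩
      exact Finset.mem_Icc.mpr ⟨by omega, hz2⟩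
    · intro z hz hz'
      rcases Finset.mem_Icc.mp hz with ⟨hz1, hz2⟩
      have hzz : z = n + r := by
        have : ¬ (n + r + 1 ≤ z ∧ z ≤ 2*n - a) := fun hh => hz' (Finset.mem_Icc.mpr hh)
        omega
      rw [hzz]
      exact Nat.choose_succ_self (n + r)
  have h6 : ∑ i ∈ Finset.Icc (n + r) (2*n - a), Nat.choose i (n + r)
      = Nat.choose (2*n - a + 1) (n + r + 1) := Nat.sum_Icc_choose _ _
  have h7 : ∑ i ∈ Finset.Icc (n + r + 1) (2*n - a), Nat.choose i (n + r + 1)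
      = Nat.choose (2*n - a + 1) (n + r + 2) := Nat.sum_Icc_choose _ _
  have h4a := h4 (n + r)
  have h4b := h4 (n + r + 1)
  omega

lemma Mrec_closed : ∀ n r m, m + r ≤ n →
    Mrec n r m + Nat.choose (2*n - m) (n + r + 1) = Nat.choose (2*n - m) (n - r - m) := by
  intro n
  induction n with
  | zero =>
    intro r m h
    have hr : r = 0 := by omega
    have hm : m = 0 := by omega
    subst hr; subst hm
    rfl
  | succ n ih =>
    intro r m h
    by_cases hedge : m + r = n + 1
    · have hz1 : n + 1 - r - m = 0 := by omega
      have hz2 : Nat.choose (2*(n+1) - m) (n + 1 + r + 1) = 0 := by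
        apply Nat.choose_eq_zero_of_lt
        omega
      rw [hz1, hz2, Nat.choose_zero_right, Nat.add_zero]
      cases m with
      | zero =>
        have hr : r = n + 1 := by omega
        subst hr
        rw [Mrec_succ_zero_succ]
        have hs2 : ∑ m₀ ∈ Finset.Icc 0 n, Mrec n (n+1) m₀ = 0 :=
          Finset.sum_eq_zero (fun m₀ _ => Mrec_zero n (n+1) m₀ (by omega))
        have hs1 : ∑ m₀ ∈ Finset.range (n+1), Mrec n n m₀ = Mrec n n 0 := by
          rw [Finset.sum_eq_single 0]
          · intro m₀ _ hm₀
            exact Mrec_zero n n m₀ (by omega)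
          · intro hh
            exact absurd (Finset.mem_range.mpr (by omega)) hh
        have hM : Mrec n n 0 = 1 := by
          have hcl := ih n 0 (by omega)
          have hz : Nat.choose (2*n - 0) (n + n + 1) = 0 := Nat.choose_eq_zero_of_lt (by omega)
          have hz' : n - n - 0 = 0 := by omega
          rw [hz, hz'] at hcl
          simpa using hcl
        rw [hs1, hs2, hM]
      | succ m' =>
        rw [Mrec_succ_succ]
        have hs : ∑ m₀ ∈ Finset.Icc (m'+1) n, Mrec n r m₀ = 0 :=
          Finset.sum_eq_zero (fun m₀ hm₀ => Mrec_zero n r m₀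
            (by rcases Finset.mem_Icc.mp hm₀ with ⟨h1, -⟩; omega))
        have hM : Mrec n r m' = 1 := by
          have hcl := ih r m' (by omega)
          have hz : Nat.choose (2*n - m') (n + r + 1) = 0 := Nat.choose_eq_zero_of_lt (by omega)
          have hz' : n - r - m' = 0 := by omega
          rw [hz, hz'] at hcl
          simpa using hcl
        rw [hs, hM]
    · have hmain : m + r ≤ n := by omega
      have hsum := sum_Mrec n ih
      cases m with
      | zero =>
        cases r with
        | zero =>
          rw [Mrec_succ_zero_zero]
          have hS := hsum 0 0 (by omega)
          have hp1 : Nat.choose (2*(n+1) - 0) (n + 1 + 0 + 1) =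
              Nat.choose (2*n + 1) (n + 1) + Nat.choose (2*n + 1) (n + 2) := by
            have e1 : 2*(n+1) - 0 = (2*n + 1) + 1 := by omega
            have e2 : n + 1 + 0 + 1 = (n + 1) + 1 := by omega
            rw [e1, e2, Nat.choose_succ_succ]
          have hp2 : Nat.choose (2*(n+1) - 0) (n + 1 - 0 - 0) =
              Nat.choose (2*n + 1) n + Nat.choose (2*n + 1) (n + 1) := by
            have e1 : 2*(n+1) - 0 = (2*n + 1) + 1 := by omega
            have e2 : n + 1 - 0 - 0 = n + 1 := by omega
            rw [e1, e2, Nat.choose_succ_succ]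
          have hsym : Nat.choose (2*n + 1) (n + 1) = Nat.choose (2*n + 1) n := by
            have e : n + 1 = (2*n + 1) - n := by omega
            rw [e]
            exact Nat.choose_symm (by omega)
          have e3 : 2*n - 0 + 1 = 2*n + 1 := by omega
          have e4 : n + 0 + 2 = n + 2 := by omega
          have e5 : n + 0 + 1 = n + 1 := by omega
          rw [e3, e4, e5] at hS
          omega
        | succ r' =>
          rw [Mrec_succ_zero_succ]
          have hS1 := hsum r' 0 (by omega)
          have hS2 := hsum (r'+1) 0 (by omega)
          have hrange : ∑ m₀ ∈ Finset.range (n+1), Mrec n r' m₀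
              = ∑ m₀ ∈ Finset.Icc 0 n, Mrec n r' m₀ := by
            apply Finset.sum_congr _ (fun _ _ => rfl)
            ext z
            simp only [Finset.mem_Icc, Finset.mem_range]
            omega
          have e1 : 2*n - 0 + 1 = 2*n + 1 := by omega
          have e2 : n + r' + 2 = n + r' + 2 := rfl
          rw [e1] at hS1 hS2
          have e3 : n + (r'+1) + 2 = n + r' + 3 := by omega
          have e4 : n + (r'+1) + 1 = n + r' + 2 := by omega
          rw [e3, e4] at hS2
          have hp1 : Nat.choose (2*(n+1) - 0) (n + 1 + (r'+1) + 1) =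
              Nat.choose (2*n + 1) (n + r' + 2) + Nat.choose (2*n + 1) (n + r' + 3) := by
            have f1 : 2*(n+1) - 0 = (2*n + 1) + 1 := by omega
            have f2 : n + 1 + (r'+1) + 1 = (n + r' + 2) + 1 := by omega
            rw [f1, f2, Nat.choose_succ_succ]
          have hp2 : Nat.choose (2*(n+1) - 0) (n + 1 - (r'+1) - 0) =
              Nat.choose (2*n + 1) (n + r' + 1) + Nat.choose (2*n + 1) (n + r' + 2) := by
            have f1 : 2*(n+1) - 0 = (2*n + 1) + 1 := by omega
            have f2 : n + 1 - (r'+1) - 0 = ((2*n + 1) + 1) - (n + r' + 2) := by omega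
            rw [f1, f2, Nat.choose_symm (by omega)]
            have f3 : n + r' + 2 = (n + r' + 1) + 1 := by omega
            rw [f3, Nat.choose_succ_succ]
          rw [hrange]
          omega
      | succ m' =>
        rw [Mrec_succ_succ]
        have hS := hsum r (m'+1) (by omega)
        have hC := ih r m' (by omega)
        have e1 : 2*n - (m'+1) + 1 = 2*n - m' := by omega
        rw [e1] at hS
        have hp1 : Nat.choose (2*(n+1) - (m'+1)) (n + 1 + r + 1) =
            Nat.choose (2*n - m') (n + r + 1) + Nat.choose (2*n - m') (n + r + 2) := by
          have f1 : 2*(n+1) - (m'+1) = (2*n - m') + 1 := by omega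
          have f2 : n + 1 + r + 1 = (n + r + 1) + 1 := by omega
          rw [f1, f2, Nat.choose_succ_succ]
        have hp2 : Nat.choose (2*(n+1) - (m'+1)) (n + 1 - r - (m'+1)) =
            Nat.choose (2*n - m') (n - r - m') + Nat.choose (2*n - m') (n + r + 1) := by
          have f1 : 2*(n+1) - (m'+1) = (2*n - m') + 1 := by omega
          have f2 : n + 1 - r - (m'+1) = (n - r - m' - 1) + 1 := by omega
          rw [f1, f2, Nat.choose_succ_succ]
          simp only [Nat.succ_eq_add_one]
          have f3 : n - r - m' - 1 + 1 = n - r - m' := by omega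
          rw [f3]
          have f4 : Nat.choose (2*n - m') (n - r - m' - 1) = Nat.choose (2*n - m') (n + r + 1) := by
            have f5 : n - r - m' - 1 = (2*n - m') - (n + r + 1) := by omega
            rw [f5]
            exact Nat.choose_symm (by omega)
          omega
        omega
lemma card_NS_closed (n r : ℕ) (hr : r ≤ n) :
    (NS n r).card + Nat.choose (2*n + 1) (n + r + 2) = Nat.choose (2*n + 1) (n + r + 1) := by
  rw [card_NS]
  have hrange : ∑ m₀ ∈ Finset.range (n+1), (TC n r m₀).card
      = ∑ m₀ ∈ Finset.Icc 0 n, Mrec n r m₀ := by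
    rw [show Finset.range (n+1) = Finset.Icc 0 n from by
      ext z; simp only [Finset.mem_Icc, Finset.mem_range]; omega]
    exact Finset.sum_congr rfl (fun m₀ _ => card_TC_eq n r m₀)
  rw [hrange]
  have := sum_Mrec n (Mrec_closed n) r 0 (by omega)
  have e1 : 2*n - 0 + 1 = 2*n + 1 := by omega
  rw [e1] at this
  exact this
end MCTaux

/-- The number of multi-Catalan tableaux of size `n` with `r` A's on the diagonal,
counted with α = β = 1, is (2(r+1)/(n+r+2)) * binom(2n+1, n-r). -/
theorem multiCatalan_count (n r : ℕ) (hr : r ≤ n) :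
    (Nat.card {F : Fin n → Fin n → Option MSym //
        IsMCT n F ∧ (typeWord n F).count Letter.A = r} : ℚ) =
      2 * (r + 1) / (n + r + 2) * Nat.choose (2 * n + 1) (n - r) := by
  classical
  have hcard : Nat.card {F : Fin n → Fin n → Option MSym //
      IsMCT n F ∧ (typeWord n F).count Letter.A = r} = (MCTaux.NS n r).card := by
    rw [Nat.card_eq_fintype_card, Fintype.card_subtype]
    unfold MCTaux.NS MCTaux.cA
    congr 1
  have key1 := MCTaux.card_NS_closed n r hr
  have key2 := Nat.choose_succ_right_eq (2*n + 1) (n + r + 1)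
  rw [show 2*n + 1 - (n + r + 1) = n - r from by omega] at key2
  have key3 : Nat.choose (2*n + 1) (n - r) = Nat.choose (2*n + 1) (n + r + 1) := by
    rw [show n - r = (2*n + 1) - (n + r + 1) from by omega]
    exact Nat.choose_symm (by omega)
  rw [hcard]
  have hq1 : ((MCTaux.NS n r).card : ℚ)
      = (Nat.choose (2*n + 1) (n + r + 1) : ℚ) - (Nat.choose (2*n + 1) (n + r + 2) : ℚ) := by
    have := key1
    have hcast : ((MCTaux.NS n r).card : ℚ) + (Nat.choose (2*n + 1) (n + r + 2) : ℚ)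
        = (Nat.choose (2*n + 1) (n + r + 1) : ℚ) := by exact_mod_cast congrArg (Nat.cast : ℕ → ℚ) this
    linarith
  have hq2 : (Nat.choose (2*n + 1) (n + r + 2) : ℚ) * ((n : ℚ) + r + 2)
      = (Nat.choose (2*n + 1) (n + r + 1) : ℚ) * ((n : ℚ) - r) := by
    have hcast : ((Nat.choose (2*n + 1) (n + r + 2) * (n + r + 2) : ℕ) : ℚ)
        = ((Nat.choose (2*n + 1) (n + r + 1) * (n - r) : ℕ) : ℚ) :=
      congrArg (Nat.cast : ℕ → ℚ) key2
    push_cast [Nat.cast_sub hr] at hcast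
    linarith
  have hq3 : (Nat.choose (2*n + 1) (n - r) : ℚ) = (Nat.choose (2*n + 1) (n + r + 1) : ℚ) := by
    exact_mod_cast congrArg (Nat.cast : ℕ → ℚ) key3
  have hne : ((n : ℚ) + r + 2) ≠ 0 := by positivity
  rw [show (2 * n + 1 : ℕ) = 2*n + 1 from rfl]
  rw [hq3, hq1]
  rw [div_mul_eq_mul_div, eq_div_iff hne]
  push_cast
  ring_nf
  ring_nf at hq2
  linarith
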